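/- arXiv:1909.05377 — 3 statements merged into one kernel-verified Lean document; each statement's English description precedes it below -/
import Mathlib

section
/- Let C : ℝⁿ × ℝ → ℝⁿ be continuously differentiable and let κ > 0. Suppose p : ℝ → ℝⁿ is differentiable and satisfies the closed-loop equation (I − D_p C(p(t),t)) ṗ(t) = κ (C(p(t),t) − p(t)) + ∂C/∂t (p(t),t) for all t. Then the tracking error e(t) = p(t) − C(p(t),t) satisfies ė(t) = −κ e(t) for all t. -/
/-- Error dynamics of the TVD-C control law. If `C : ℝⁿ × ℝ → ℝⁿ` is
continuously differentiable, `κ > 0`, and the differentiable trajectory `p`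
satisfies the closed-loop equation
`(I − D_p C(p(t),t)) ṗ(t) = κ (C(p(t),t) − p(t)) + ∂C/∂t (p(t),t)` for all `t`,
then the tracking error `e(t) = p(t) − C(p(t),t)` satisfies `ė(t) = −κ e(t)`. -/
theorem tvdc_error_dynamics {n : ℕ}
    (C : EuclideanSpace ℝ (Fin n) × ℝ → EuclideanSpace ℝ (Fin n))
    (hC : ContDiff ℝ 1 C) (κ : ℝ) (hκ : 0 < κ)
    (p : ℝ → EuclideanSpace ℝ (Fin n)) (hp : Differentiable ℝ p)
    (hclosed : ∀ t : ℝ,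
      deriv p t - fderiv ℝ (fun x => C (x, t)) (p t) (deriv p t)
        = κ • (C (p t, t) - p t) + deriv (fun s => C (p t, s)) t) :
    ∀ t : ℝ, deriv (fun τ => p τ - C (p τ, τ)) t = -κ • (p t - C (p t, t)) := by
  intro t
  have hCd : HasFDerivAt C (fderiv ℝ C (p t, t)) (p t, t) :=
    ((hC.differentiable one_ne_zero) (p t, t)).hasFDerivAt
  set F := fderiv ℝ C (p t, t) with hF
  have hpd : HasDerivAt p (deriv p t) t := (hp t).hasDerivAt
  have hg : HasDerivAt (fun τ => (p τ, τ)) (deriv p t, 1) t := hpd.prodMk (hasDerivAt_id t)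
  have hcomp : HasDerivAt (fun τ => C (p τ, τ)) (F (deriv p t, 1)) t := by
    have := HasFDerivAt.comp_hasDerivAt (f := fun τ => (p τ, τ)) t hCd hg
    exact this
  have h1 : HasFDerivAt (fun x => C (x, t))
      (F.comp (ContinuousLinearMap.inl ℝ _ _)) (p t) :=
    hCd.comp (p t) (hasFDerivAt_prodMk_left (p t) t)
  have h2 : HasDerivAt (fun s => C (p t, s)) (F (0, 1)) t := by
    have := HasFDerivAt.comp_hasDerivAt (f := fun s => (p t, s)) t hCd ((hasDerivAt_const t (p t)).prodMk (hasDerivAt_id t))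
    exact this
  have hder : HasDerivAt (fun τ => p τ - C (p τ, τ)) (deriv p t - F (deriv p t, 1)) t :=
    hpd.sub hcomp
  rw [hder.deriv]
  have heq := hclosed t
  rw [h1.fderiv, h2.deriv] at heq
  have hsplit : F (deriv p t, 1) = F (deriv p t, 0) + F (0, 1) := by
    rw [← map_add, Prod.mk_add_mk, add_zero, zero_add]
  have hinl : (F.comp (ContinuousLinearMap.inl ℝ _ _)) (deriv p t) = F (deriv p t, 0) := rfl
  rw [hinl] at heq
  rw [hsplit]
  have : deriv p t - F (deriv p t, 0) - F (0, 1) = κ • (C (p t, t) - p t) := by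
    rw [sub_eq_iff_eq_add]; rw [heq]
  rw [show deriv p t - (F (deriv p t, 0) + F (0, 1))
      = deriv p t - F (deriv p t, 0) - F (0, 1) by abel, this,
    smul_sub, neg_smul, smul_sub, neg_sub]
end

section
/- Let C : ℝⁿ × ℝ → ℝⁿ be continuously differentiable, κ > 0, and t₀ ∈ ℝ. Suppose p : ℝ → ℝⁿ is differentiable and satisfies (I − D_p C(p(t),t)) ṗ(t) = κ (C(p(t),t) − p(t)) + ∂C/∂t (p(t),t) for all t. Then for all t ≥ t₀, ‖p(t) − C(p(t),t)‖ = exp(−κ (t − t₀)) · ‖p(t₀) − C(p(t₀),t₀)‖. -/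
/-- Corollary 1 of the paper: Under the TVD-C control law, the
closed-loop trajectory converges exponentially to a CVT: for all `t ≥ t₀`,
`‖p(t) − C(p(t),t)‖ = exp(−κ (t − t₀)) ‖p(t₀) − C(p(t₀),t₀)‖`. -/
theorem tvdc_exponential_convergence {n : ℕ}
    (C : EuclideanSpace ℝ (Fin n) × ℝ → EuclideanSpace ℝ (Fin n))
    (hC : ContDiff ℝ 1 C) (κ : ℝ) (hκ : 0 < κ) (t₀ : ℝ)
    (p : ℝ → EuclideanSpace ℝ (Fin n)) (hp : Differentiable ℝ p)
    (hclosed : ∀ t : ℝ,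
      deriv p t - fderiv ℝ (fun x => C (x, t)) (p t) (deriv p t)
        = κ • (C (p t, t) - p t) + deriv (fun s => C (p t, s)) t) :
    ∀ t : ℝ, t₀ ≤ t →
      ‖p t - C (p t, t)‖ = Real.exp (-κ * (t - t₀)) * ‖p t₀ - C (p t₀, t₀)‖ := by
  have hCd : Differentiable ℝ C := hC.differentiable one_ne_zero
  set e : ℝ → EuclideanSpace ℝ (Fin n) := fun s => p s - C (p s, s) with he
  have hederiv : ∀ s, HasDerivAt e (-κ • e s) s := by
    intro s
    have hps : HasDerivAt p (deriv p s) s := (hp s).hasDerivAt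
    have hq : HasDerivAt (fun u => (p u, u)) (deriv p s, 1) s :=
      hps.prodMk (hasDerivAt_id s)
    have hL : HasFDerivAt C (fderiv ℝ C (p s, s)) (p s, s) := (hCd _).hasFDerivAt
    set L := fderiv ℝ C (p s, s) with hLdef
    have hcomp' := HasFDerivAt.comp_hasDerivAt (f := fun u => (p u, u)) s hL hq
    have hcomp : HasDerivAt (fun u => C (p u, u)) (L (deriv p s, 1)) s := hcomp'
    have h1 : HasFDerivAt (fun x => C (x, s))
        (L.comp (ContinuousLinearMap.inl ℝ _ ℝ)) (p s) :=
      hL.comp (p s) (hasFDerivAt_prodMk_left (p s) s)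
    have h1' : fderiv ℝ (fun x => C (x, s)) (p s) (deriv p s) = L (deriv p s, 0) := by
      rw [h1.fderiv]; rfl
    have h2 : HasDerivAt (fun u => C (p s, u)) (L (0, 1)) s :=
      hL.comp_hasDerivAt s ((hasDerivAt_const s (p s)).prodMk (hasDerivAt_id s))
    have h2' : deriv (fun u => C (p s, u)) s = L (0, 1) := h2.deriv
    have hcl := hclosed s
    rw [h1', h2'] at hcl
    have hsplit : L (deriv p s, 1) = L (deriv p s, 0) + L (0, 1) := by
      rw [← L.map_add]; norm_num
    have hE : HasDerivAt e (deriv p s - L (deriv p s, 1)) s := hps.sub hcomp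
    have : deriv p s - L (deriv p s, 1) = -κ • e s := by
      rw [hsplit]
      have : deriv p s - (L (deriv p s, 0) + L (0, 1))
          = (deriv p s - L (deriv p s, 0)) - L (0, 1) := by abel
      rw [this, hcl]
      simp [he, smul_sub]
      abel
    rwa [this] at hE
  have hconst : ∀ t, Real.exp (κ * (t - t₀)) • e t = e t₀ := by
    set g : ℝ → EuclideanSpace ℝ (Fin n) := fun s => Real.exp (κ * (s - t₀)) • e s with hg
    have hgd : ∀ s, HasDerivAt g 0 s := by
      intro s
      have hexp : HasDerivAt (fun u => Real.exp (κ * (u - t₀)))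
          (κ * Real.exp (κ * (s - t₀))) s := by
        have h0 : HasDerivAt (fun u : ℝ => κ * (u - t₀)) κ s := by
          simpa using ((hasDerivAt_id s).sub_const t₀).const_mul κ
        simpa [mul_comm, Function.comp_def] using (Real.hasDerivAt_exp (κ * (s - t₀))).comp s h0
      have := hexp.smul (hederiv s)
      have hz : Real.exp (κ * (s - t₀)) • (-κ • e s)
          + (κ * Real.exp (κ * (s - t₀))) • e s = 0 := by
        rw [smul_smul, ← add_smul]
        have hc : Real.exp (κ * (s - t₀)) * (-κ) + κ * Real.exp (κ * (s - t₀)) = 0 := by ring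
        rw [hc, zero_smul]
      rwa [hz] at this
    have hdiff : Differentiable ℝ g := fun s => (hgd s).differentiableAt
    have hcst := is_const_of_deriv_eq_zero hdiff (fun s => (hgd s).deriv)
    intro t
    have := hcst t t₀
    simpa [hg] using this
  intro t ht
  have h := hconst t
  have hnorm := congrArg norm h
  rw [norm_smul, Real.norm_eq_abs, abs_of_pos (Real.exp_pos _)] at hnorm
  have : ‖e t‖ = Real.exp (-(κ * (t - t₀))) * ‖e t₀‖ := by
    rw [Real.exp_neg, ← hnorm]; field_simp
  simpa [he, neg_mul] using this
end

section
/- Let C : ℝⁿ × ℝ → ℝⁿ be continuously differentiable and κ > 0. Suppose p : ℝ → ℝⁿ is differentiable and satisfies the decentralized closed-loop equation ṗ(t) = (I + A(t)) u(t), where A(t) = D_p C(p(t),t) and u(t) = κ (C(p(t),t) − p(t)) + ∂C/∂t (p(t),t). Then the error e(t) = p(t) − C(p(t),t) satisfies ė(t) = −κ e(t) − A(t)² u(t) for all t. -/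
/-- Error dynamics of the decentralized TVD-D₁ control law. If the
trajectory satisfies `ṗ(t) = (I + A(t)) u(t)` with `A(t) = D_p C(p(t),t)` and
`u(t) = κ (C(p(t),t) − p(t)) + ∂C/∂t (p(t),t)`, then the error
`e(t) = p(t) − C(p(t),t)` satisfies `ė(t) = −κ e(t) − A(t)² u(t)`. -/
theorem tvdd1_error_dynamics {n : ℕ}
    (C : EuclideanSpace ℝ (Fin n) × ℝ → EuclideanSpace ℝ (Fin n))
    (hC : ContDiff ℝ 1 C) (κ : ℝ) (hκ : 0 < κ)
    (p : ℝ → EuclideanSpace ℝ (Fin n)) (hp : Differentiable ℝ p)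
    (A : ℝ → (EuclideanSpace ℝ (Fin n) →L[ℝ] EuclideanSpace ℝ (Fin n)))
    (u : ℝ → EuclideanSpace ℝ (Fin n))
    (hA : ∀ t : ℝ, A t = fderiv ℝ (fun x => C (x, t)) (p t))
    (hu : ∀ t : ℝ, u t = κ • (C (p t, t) - p t) + deriv (fun s => C (p t, s)) t)
    (hclosed : ∀ t : ℝ, deriv p t = u t + A t (u t)) :
    ∀ t : ℝ,
      deriv (fun τ => p τ - C (p τ, τ)) t
        = -κ • (p t - C (p t, t)) - A t (A t (u t)) := by
  intro t
  have hCdiff : Differentiable ℝ C := hC.differentiable one_ne_zero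
  set L := fderiv ℝ C (p t, t) with hL
  have hLfd : HasFDerivAt C L (p t, t) := (hCdiff (p t, t)).hasFDerivAt
  -- derivative of τ ↦ (p τ, τ)
  have hP : HasDerivAt (fun τ : ℝ => (p τ, τ)) (deriv p t, 1) t :=
    (hp t).hasDerivAt.prodMk (hasDerivAt_id t)
  have hComp : HasDerivAt (fun τ => C (p τ, τ)) (L (deriv p t, 1)) t :=
    HasFDerivAt.comp_hasDerivAt (f := fun τ => (p τ, τ)) t hLfd hP
  -- A t v = L (v, 0)
  have hAv : ∀ v : EuclideanSpace ℝ (Fin n), A t v = L (v, 0) := by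
    intro v
    have h1 : HasFDerivAt (fun x : EuclideanSpace ℝ (Fin n) => C (x, t))
        (L.comp (ContinuousLinearMap.inl ℝ (EuclideanSpace ℝ (Fin n)) ℝ)) (p t) :=
      hLfd.comp (p t) (hasFDerivAt_prodMk_left (p t) t)
    rw [hA t, h1.fderiv]
    rfl
  -- time partial derivative
  have hW : HasDerivAt (fun s => C (p t, s)) (L (0, 1)) t := by
    have h2 : HasDerivAt (fun s : ℝ => ((p t : EuclideanSpace ℝ (Fin n)), s)) ((0 : EuclideanSpace ℝ (Fin n)), (1 : ℝ)) t :=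
      (hasDerivAt_const t (p t)).prodMk (hasDerivAt_id t)
    exact hLfd.comp_hasDerivAt t h2
  have hWe : deriv (fun s => C (p t, s)) t = L (0, 1) := hW.deriv
  have hE : HasDerivAt (fun τ => p τ - C (p τ, τ)) (deriv p t - L (deriv p t, 1)) t :=
    (hp t).hasDerivAt.sub hComp
  rw [hE.deriv]
  have hsplit : L (deriv p t, 1) = L (deriv p t, 0) + L (0, 1) := by
    rw [← map_add]
    norm_num
  rw [hsplit, ← hAv (deriv p t), ← hWe, hclosed t, map_add, hAv (A t (u t)),
    ← hAv (A t (u t))]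
  have hut := hu t
  rw [hut]
  set w := deriv (fun s => C (p t, s)) t
  set a := A t (κ • (C (p t, t) - p t) + w)
  module
end
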